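/- If every line in ℝ^d strongly intersecting [0,1]^d meets a set K ⊆ ℝ^d, then for every hyperplane H ⊆ ℝ^d, the orthogonal projection of K onto H has nonempty interior in H. -/

import Mathlib

open Set Metric Module

open RealInnerProductSpace

set_option maxHeartbeats 1000000

/-- `L` is a line in `ℝ^d`. -/
def IsLine {d : ℕ} (L : Set (Fin d → ℝ)) : Prop :=
  ∃ p v : Fin d → ℝ, v ≠ 0 ∧ L = {x | ∃ c : ℝ, x = p + c • v}

/-- A line `L` strongly intersects an axis-parallel cube `C` if
`diam^∞(L ∩ C) ≥ diam^∞(C) / (2d)`.  (The metric on `Fin d → ℝ`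
is the sup metric, so `Metric.diam` is exactly `diam^∞`.) -/
def StronglyIntersects {d : ℕ} (L C : Set (Fin d → ℝ)) : Prop :=
  Metric.diam C / (2 * d) ≤ Metric.diam (L ∩ C)

/-- The unit cube `[0,1]^d`. -/
def unitCube (d : ℕ) : Set (Fin d → ℝ) := {x | ∀ i, x i ∈ Set.Icc (0 : ℝ) 1}

/-- The orthogonal projection (with respect to the Euclidean dot product)
of the set `K` onto the affine subspace `H`, viewed inside `H`. -/
def projIn {d : ℕ} (H : AffineSubspace ℝ (Fin d → ℝ)) (K : Set (Fin d → ℝ)) :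
    Set H :=
  {p | ∃ x ∈ K, ∀ u ∈ H.direction, (∑ i, (x i - (p : Fin d → ℝ) i) * u i) = 0}

/-- If every line strongly intersecting `[0,1]^d` meets `K`, then the orthogonal
projection of `K` onto any hyperplane `H` has nonempty interior in `H`. -/
theorem proj_interior_nonempty_of_strong_intersections {d : ℕ} (hd : 1 ≤ d)
    (K : Set (Fin d → ℝ))
    (hK : ∀ L : Set (Fin d → ℝ), IsLine L → StronglyIntersects L (unitCube d) →
      (L ∩ K).Nonempty)
    (H : AffineSubspace ℝ (Fin d → ℝ)) (hne : (H : Set (Fin d → ℝ)).Nonempty)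
    (hdim : finrank ℝ H.direction = d - 1) :
    (interior (projIn H K)).Nonempty := by
  classical
  obtain ⟨q, hq⟩ := hne
  set e : (Fin d → ℝ) ≃ₗ[ℝ] EuclideanSpace ℝ (Fin d) :=
    (WithLp.linearEquiv 2 ℝ (Fin d → ℝ)).symm with he
  set D : Submodule ℝ (EuclideanSpace ℝ (Fin d)) :=
    H.direction.map (e : (Fin d → ℝ) →ₗ[ℝ] EuclideanSpace ℝ (Fin d)) with hD
  have hDrank : finrank ℝ D = d - 1 := by
    rw [hD, LinearEquiv.finrank_map_eq]; exact hdim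
  have hsum : finrank ℝ D + finrank ℝ Dᗮ = d := by
    rw [D.finrank_add_finrank_orthogonal, finrank_euclideanSpace_fin]
  have hOrank : finrank ℝ (Dᗮ) = 1 := by omega
  -- pick a nonzero normal vector
  obtain ⟨n', hn'D, hn'0⟩ : ∃ x ∈ Dᗮ, x ≠ 0 := by
    rw [← Submodule.ne_bot_iff]
    intro h
    rw [h] at hOrank
    simp [finrank_bot] at hOrank
  have hspan : Submodule.span ℝ {n'} = Dᗮ :=
    Submodule.eq_of_le_of_finrank_eq
      ((Submodule.span_singleton_le_iff_mem _ _).mpr hn'D)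
      (by rw [finrank_span_singleton hn'0, hOrank])
  have htop : D ⊔ Dᗮ = ⊤ := Submodule.sup_orthogonal_of_hasOrthogonalProjection
  set cc : Fin d → ℝ := fun _ => 1/2 with hcc
  have hmemtop : e (cc - q) ∈ D ⊔ Dᗮ := by rw [htop]; exact Submodule.mem_top
  obtain ⟨w, hw, z, hz, hwz⟩ := Submodule.mem_sup.mp hmemtop
  obtain ⟨t₀, ht₀⟩ := Submodule.mem_span_singleton.mp (hspan ▸ hz)
  set n : Fin d → ℝ := e.symm n' with hn
  have hne0 : n ≠ 0 := by
    intro h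
    apply hn'0
    rw [← e.apply_symm_apply n', ← hn, h, map_zero]
  have hni : ∀ i, n i = n' i := fun i => rfl
  -- orthogonality
  have hortho : ∀ u ∈ H.direction, ∑ i, n i * u i = 0 := by
    intro u hu
    have h1 : (e u) ∈ D := Submodule.mem_map_of_mem hu
    have h2 : ⟪e u, n'⟫ = 0 := (Submodule.mem_orthogonal D n').mp hn'D _ h1
    rw [PiLp.inner_apply] at h2
    simp only [RCLike.inner_apply, starRingEnd_apply, star_trivial] at h2
    rw [← h2]
    apply Finset.sum_congr rfl
    intro i _
    rw [hni i, mul_comm]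
    exact mul_comm _ _
  -- point P0 on H with cc = P0 + t₀ • n
  have hwd : e.symm w ∈ H.direction := by
    obtain ⟨u, hu, huw⟩ := hw
    have : e.symm w = u := by rw [← huw]; exact e.symm_apply_apply u
    rwa [this]
  set P0 : Fin d → ℝ := e.symm w + q with hP0def
  have hP0 : P0 ∈ H := AffineSubspace.vadd_mem_of_mem_direction hwd hq
  have hccP0 : cc = P0 + t₀ • n := by
    have h1 : e.symm (w + z) = cc - q := by rw [hwz, e.symm_apply_apply]
    have h2 : e.symm z = t₀ • n := by rw [← ht₀, map_smul]
    rw [map_add, h2] at h1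
    rw [hP0def]
    have := h1
    funext i
    have h3 := congrFun h1 i
    simp only [Pi.add_apply, Pi.sub_apply] at h3 ⊢
    linarith [h3]
  set m : ℝ := ‖n‖ with hm
  have hm0 : 0 < m := norm_pos_iff.mpr hne0
  set t : ℝ := 3 / (8 * m) with ht
  have ht0 : 0 < t := by positivity
  have htm : t * m = 3/8 := by field_simp [ht]; rw [ht]; field_simp
  -- cube facts
  have hCb : Bornology.IsBounded (unitCube d) := by
    apply (Metric.isBounded_closedBall (x := (0 : Fin d → ℝ)) (r := 1)).subset
    intro x hx
    rw [Metric.mem_closedBall, dist_pi_le_iff zero_le_one]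
    intro i
    rw [Real.dist_eq]
    obtain ⟨h1, h2⟩ := hx i
    rw [abs_sub_le_iff]; constructor <;> simp <;> linarith
  have hCd : Metric.diam (unitCube d) ≤ 1 := by
    apply Metric.diam_le_of_forall_dist_le zero_le_one
    intro x hx y hy
    rw [dist_pi_le_iff zero_le_one]
    intro i
    rw [Real.dist_eq]
    obtain ⟨h1, h2⟩ := hx i
    obtain ⟨h3, h4⟩ := hy i
    rw [abs_sub_le_iff]; constructor <;> linarith
  -- the open set
  set p₀ : H := ⟨P0, hP0⟩ with hp₀
  have hsub : Metric.ball p₀ (1/8) ⊆ projIn H K := by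
    rintro p hp
    rw [Metric.mem_ball, Subtype.dist_eq, hp₀] at hp
    have hpi : ∀ i, |(p : Fin d → ℝ) i - P0 i| ≤ 1/8 := by
      intro i
      have h1 := dist_le_pi_dist (p : Fin d → ℝ) P0 i
      rw [Real.dist_eq] at h1
      exact le_trans h1 (le_of_lt hp)
    have hnib : ∀ (s : ℝ), |s| ≤ t → ∀ i, |s * n i| ≤ 3/8 := by
      intro s hs i
      rw [abs_mul]
      calc |s| * |n i| ≤ t * m := by
            apply mul_le_mul hs _ (abs_nonneg _) (le_of_lt ht0)
            rw [← Real.norm_eq_abs]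
            exact norm_le_pi_norm n i
        _ = 3/8 := htm
    set L : Set (Fin d → ℝ) := {x | ∃ c : ℝ, x = (p : Fin d → ℝ) + c • n} with hL
    have hLline : IsLine L := ⟨p, n, hne0, rfl⟩
    -- the two endpoints
    have hmem : ∀ (s : ℝ), |s| ≤ t → (p : Fin d → ℝ) + (t₀ + s) • n ∈ unitCube d := by
      intro s hs i
      have h1 := hpi i
      have h2 := hnib s hs i
      have h3 : t₀ * n i = 1/2 - P0 i := by
        have := congrFun hccP0 i
        simp only [Pi.add_apply, Pi.smul_apply, smul_eq_mul, hcc] at this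
        linarith
      simp only [Pi.add_apply, Pi.smul_apply, smul_eq_mul]
      rw [add_mul, h3]
      rw [abs_sub_le_iff] at h1
      rw [abs_le] at h2
      constructor <;> [linarith [h1.1, h1.2, h2.1]; linarith [h1.1, h1.2, h2.2]]
    have hta : |t| ≤ t := by rw [abs_of_pos ht0]
    have htb : |(-t : ℝ)| ≤ t := by rw [abs_neg, abs_of_pos ht0]
    set a : Fin d → ℝ := (p : Fin d → ℝ) + (t₀ + t) • n with ha
    set b : Fin d → ℝ := (p : Fin d → ℝ) + (t₀ + -t) • n with hb
    have haL : a ∈ L ∩ unitCube d := ⟨⟨t₀ + t, rfl⟩, hmem t hta⟩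
    have hbL : b ∈ L ∩ unitCube d := ⟨⟨t₀ + -t, rfl⟩, hmem (-t) htb⟩
    have hdistab : dist a b = 3/4 := by
      rw [dist_eq_norm]
      have : a - b = (2*t) • n := by
        rw [ha, hb]
        funext i
        simp only [Pi.sub_apply, Pi.add_apply, Pi.smul_apply, smul_eq_mul]
        ring
      rw [this, norm_smul, Real.norm_eq_abs, abs_of_pos (by linarith), ← hm]
      linarith [htm]
    have hSI : StronglyIntersects L (unitCube d) := by
      unfold StronglyIntersects
      have hd1 : (1:ℝ) ≤ (d:ℝ) := by exact_mod_cast hd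
      have h1 : Metric.diam (unitCube d) / (2 * (d:ℝ)) ≤ 1/2 :=
        div_le_div₀ zero_le_one hCd (by norm_num) (by linarith)
      have h2 : (3:ℝ)/4 ≤ Metric.diam (L ∩ unitCube d) := by
        rw [← hdistab]
        exact Metric.dist_le_diam_of_mem (hCb.subset Set.inter_subset_right) haL hbL
      linarith
    obtain ⟨x, hxL, hxK⟩ := hK L hLline hSI
    obtain ⟨c, hc⟩ := hxL
    refine ⟨x, hxK, ?_⟩
    intro u hu
    have h0 := hortho u hu
    rw [hc]
    have : ∀ i, ((p : Fin d → ℝ) + c • n) i - (p : Fin d → ℝ) i = c * n i := by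
      intro i; simp [smul_eq_mul]
    calc (∑ i, (((p : Fin d → ℝ) + c • n) i - (p : Fin d → ℝ) i) * u i)
        = ∑ i, c * (n i * u i) := by
          apply Finset.sum_congr rfl; intro i _; rw [this i]; ring
      _ = c * ∑ i, n i * u i := by rw [Finset.mul_sum]
      _ = 0 := by rw [h0, mul_zero]
  exact ⟨p₀, interior_maximal hsub Metric.isOpen_ball (Metric.mem_ball_self (by norm_num))⟩
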